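/- Let k = sl(2, C) with standard basis {e, h, f}, and let M be a k-module on which h acts semisimply with finite-dimensional eigenspaces and eigenvalues bounded above. If e and f both act locally finitely on M, then M is a locally finite k-module (a direct sum of finite-dimensional k-submodules). -/

import Mathlib

def ActsLocallyFinitely {M : Type*} [AddCommGroup M] [Module ℂ M]
    (T : Module.End ℂ M) : Prop :=
  ∀ m : M, FiniteDimensional ℂ (Submodule.span ℂ (Set.range fun n : ℕ => (T ^ n) m))

private lemma aux_pow_eventually_zero {M : Type*} [AddCommGroup M] [Module ℂ M]
    (S : Module.End ℂ M) (m : M) {n : ℕ} (h : (S ^ n) m = 0) {j : ℕ} (hj : n ≤ j) :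
    (S ^ j) m = 0 := by
  obtain ⟨d, rfl⟩ := Nat.exists_eq_add_of_le hj
  rw [add_comm, pow_add, Module.End.mul_apply, h, map_zero]

private lemma aux_heig {M : Type*} [AddCommGroup M] [Module ℂ M]
    (H S : Module.End ℂ M) (a : ℂ)
    (hcomm : ∀ x : M, H (S x) = S (H x) + a • S x)
    (m : M) (c : ℂ) (hm : H m = c • m) :
    ∀ n : ℕ, H ((S ^ n) m) = (c + n * a) • (S ^ n) m := by
  intro n
  induction n with
  | zero => simpa using hm
  | succ n ih =>
    have h1 : (S ^ (n + 1)) m = S ((S ^ n) m) := by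
      rw [pow_succ', Module.End.mul_apply]
    rw [h1, hcomm, ih, map_smul]
    push_cast
    module

private lemma aux_nilpotent {M : Type*} [AddCommGroup M] [Module ℂ M]
    (H S : Module.End ℂ M) (a : ℂ) (ha : a ≠ 0)
    (hcomm : ∀ x : M, H (S x) = S (H x) + a • S x)
    (m : M) (c : ℂ) (hm : H m = c • m)
    (hS : FiniteDimensional ℂ (Submodule.span ℂ (Set.range fun n : ℕ => (S ^ n) m))) :
    ∃ n : ℕ, (S ^ n) m = 0 := by
  by_contra hcon
  push_neg at hcon
  set V := Submodule.span ℂ (Set.range fun n : ℕ => (S ^ n) m) with hV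
  have hmem : ∀ n : ℕ, (S ^ n) m ∈ V := fun n => Submodule.subset_span ⟨n, rfl⟩
  have hindep : LinearIndependent ℂ (fun n : ℕ => (S ^ n) m) := by
    apply H.eigenvectors_linearIndependent' (fun n : ℕ => c + n * a)
    · intro i j hij
      have h2 : (i : ℂ) * a = (j : ℂ) * a := by
        simp only at hij
        linear_combination hij
      have := mul_right_cancel₀ ha h2
      exact_mod_cast this
    · intro n
      exact ⟨(Module.End.mem_eigenspace_iff).2 (aux_heig H S a hcomm m c hm n), hcon n⟩
  have hindep' : LinearIndependent ℂ (fun n : ℕ => (⟨(S ^ n) m, hmem n⟩ : V)) := by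
    apply LinearIndependent.of_comp V.subtype
    exact hindep
  have : Finite ℕ := hindep'.finite
  exact not_finite ℕ

private lemma aux_eigvec
    (k : Type) [LieRing k] [LieAlgebra ℂ k]
    (e hh f : k) (t : IsSl2Triple hh e f)
    (hspan : Submodule.span ℂ ({e, hh, f} : Set k) = ⊤)
    (M : Type) [AddCommGroup M] [Module ℂ M] [LieRingModule k M] [LieModule ℂ k M]
    (he : ActsLocallyFinitely (LieModule.toEnd ℂ k M e))
    (hf : ActsLocallyFinitely (LieModule.toEnd ℂ k M f))
    (c : ℂ) (m : M) (hm : ⁅hh, m⁆ = c • m) :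
    ∃ N : LieSubmodule ℂ k M, FiniteDimensional ℂ N ∧ m ∈ N := by
  set E := LieModule.toEnd ℂ k M e with hE
  set F := LieModule.toEnd ℂ k M f with hF
  set H := LieModule.toEnd ℂ k M hh with hH
  have hEa : ∀ x : M, E x = ⁅e, x⁆ := fun x => rfl
  have hFa : ∀ x : M, F x = ⁅f, x⁆ := fun x => rfl
  have hHa : ∀ x : M, H x = ⁅hh, x⁆ := fun x => rfl
  have hcommE : ∀ x : M, H (E x) = E (H x) + (2 : ℂ) • E x := by
    intro x
    simp only [hEa, hHa]
    rw [leibniz_lie, t.lie_h_e_nsmul, two_smul, add_lie, two_smul ℂ]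
    abel
  have hcommF : ∀ x : M, H (F x) = F (H x) + (-2 : ℂ) • F x := by
    intro x
    simp only [hFa, hHa]
    rw [leibniz_lie, t.lie_h_f_nsmul, two_smul, neg_lie, add_lie]
    have h2 : (-2 : ℂ) • ⁅f, x⁆ = -(⁅f, x⁆ + ⁅f, x⁆) := by
      rw [neg_smul, two_smul ℂ]
    rw [h2]
    abel
  have hEF : ∀ x : M, E (F x) = H x + F (E x) := by
    intro x
    simp only [hEa, hFa, hHa]
    rw [leibniz_lie, t.lie_e_f]
  have hmH : H m = c • m := hm
  obtain ⟨Ne, hNe⟩ := aux_nilpotent H E 2 two_ne_zero hcommE m c hmH (he m)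
  have hHEi : ∀ i : ℕ, H ((E ^ i) m) = (c + i * 2) • (E ^ i) m :=
    aux_heig H E 2 hcommE m c hmH
  choose Nf hNf using fun i : ℕ =>
    aux_nilpotent H F (-2) (by norm_num) hcommF ((E ^ i) m) (c + i * 2) (hHEi i) (hf _)
  set K := (Finset.range (Ne + 1)).sup Nf with hK
  set g : ℕ × ℕ → M := fun p => (F ^ p.2) ((E ^ p.1) m) with hg
  have hHg : ∀ i j : ℕ, H (g (i, j)) = (c + i * 2 + j * (-2)) • g (i, j) := fun i j =>
    aux_heig H F (-2) hcommF ((E ^ i) m) (c + i * 2) (hHEi i) j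
  have hgz1 : ∀ i j : ℕ, Ne ≤ i → g (i, j) = 0 := by
    intro i j hi
    have : (E ^ i) m = 0 := aux_pow_eventually_zero E m hNe hi
    simp [hg, this]
  have hgz2 : ∀ i j : ℕ, i ≤ Ne → K ≤ j → g (i, j) = 0 := by
    intro i j hi hj
    have h1 : Nf i ≤ K := Finset.le_sup (Finset.mem_range.2 (by omega))
    exact aux_pow_eventually_zero F ((E ^ i) m) (hNf i) (le_trans h1 hj)
  set T : Set M := g '' ↑((Finset.range (Ne + 1)) ×ˢ (Finset.range (K + 1))) with hT
  set W := Submodule.span ℂ T with hW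
  have hWfin : FiniteDimensional ℂ W :=
    FiniteDimensional.span_of_finite ℂ (Set.Finite.image _ (Finset.finite_toSet _))
  have hgW : ∀ i j : ℕ, g (i, j) ∈ W := by
    intro i j
    rcases le_or_gt Ne i with hi | hi
    · rw [hgz1 i j hi]; exact zero_mem W
    rcases le_or_gt K j with hj | hj
    · rw [hgz2 i j (le_of_lt hi) hj]; exact zero_mem W
    exact Submodule.subset_span ⟨(i, j), by simp [Finset.mem_product]; omega, rfl⟩
  have hgsucc : ∀ i j : ℕ, g (i, j + 1) = F (g (i, j)) := by
    intro i j
    simp only [hg]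
    rw [pow_succ', Module.End.mul_apply]
  have hFW : ∀ w ∈ W, F w ∈ W := by
    intro w hw
    induction hw using Submodule.span_induction with
    | mem x hx =>
      obtain ⟨⟨i, j⟩, _, rfl⟩ := hx
      rw [← hgsucc]
      exact hgW i (j + 1)
    | zero => simp
    | add x y _ _ hx hy => rw [map_add]; exact add_mem hx hy
    | smul a x _ hx => rw [map_smul]; exact Submodule.smul_mem W a hx
  have hHW : ∀ w ∈ W, H w ∈ W := by
    intro w hw
    induction hw using Submodule.span_induction with
    | mem x hx =>
      obtain ⟨⟨i, j⟩, _, rfl⟩ := hx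
      rw [hHg]
      exact Submodule.smul_mem W _ (hgW i j)
    | zero => simp
    | add x y _ _ hx hy => rw [map_add]; exact add_mem hx hy
    | smul a x _ hx => rw [map_smul]; exact Submodule.smul_mem W a hx
  have hEg : ∀ j i : ℕ, E (g (i, j)) ∈ W := by
    intro j
    induction j with
    | zero =>
      intro i
      have : E (g (i, 0)) = g (i + 1, 0) := by
        simp only [hg, pow_zero]
        rw [pow_succ', Module.End.mul_apply]
        simp
      rw [this]
      exact hgW (i + 1) 0
    | succ j ih =>
      intro i
      rw [hgsucc, hEF]
      exact add_mem (hHW _ (hgW i j)) (hFW _ (ih i))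
  have hEW : ∀ w ∈ W, E w ∈ W := by
    intro w hw
    induction hw using Submodule.span_induction with
    | mem x hx =>
      obtain ⟨⟨i, j⟩, _, rfl⟩ := hx
      exact hEg j i
    | zero => simp
    | add x y _ _ hx hy => rw [map_add]; exact add_mem hx hy
    | smul a x _ hx => rw [map_smul]; exact Submodule.smul_mem W a hx
  have hkW : ∀ (x : k) (w : M), w ∈ W → ⁅x, w⁆ ∈ W := by
    intro x w hw
    have hx : x ∈ Submodule.span ℂ ({e, hh, f} : Set k) := by rw [hspan]; trivial
    induction hx using Submodule.span_induction with
    | mem y hy =>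
      rcases hy with rfl | rfl | rfl
      · exact hEW w hw
      · exact hHW w hw
      · exact hFW w hw
    | zero => rw [zero_lie]; exact zero_mem W
    | add y z _ _ hy hz => rw [add_lie]; exact add_mem hy hz
    | smul a y _ hy => rw [smul_lie]; exact Submodule.smul_mem W a hy
  refine ⟨{ W with lie_mem := fun {x} {w} hw => hkW x w hw }, hWfin, ?_⟩
  have : g (0, 0) = m := by simp [hg]
  have hmW : m ∈ W := this ▸ hgW 0 0
  exact hmW

/-- **An `sl(2)` local-finiteness criterion.** Let `k = sl(2, ℂ)` with standard basis
`{e, h, f}` and let `M` be a `k`-module on which `h` acts semisimply with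
finite-dimensional eigenspaces whose eigenvalues are bounded above.  If `e` and `f`
both act locally finitely on `M`, then `M` is a locally finite `k`-module: every
vector lies in a finite-dimensional `k`-submodule (equivalently, `M` is a direct sum
of finite-dimensional `k`-submodules). -/
theorem sl2_locally_finite_criterion
    (k : Type) [LieRing k] [LieAlgebra ℂ k]
    (e hh f : k) (t : IsSl2Triple hh e f)
    (hspan : Submodule.span ℂ ({e, hh, f} : Set k) = ⊤)
    (M : Type) [AddCommGroup M] [Module ℂ M] [LieRingModule k M] [LieModule ℂ k M]
    -- `h` acts semisimply on `M` ...
    (hss : ⨆ c : ℂ, Module.End.eigenspace (LieModule.toEnd ℂ k M hh) c = (⊤ : Submodule ℂ M))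
    -- ... with finite-dimensional eigenspaces ...
    (hfin : ∀ c : ℂ, FiniteDimensional ℂ (Module.End.eigenspace (LieModule.toEnd ℂ k M hh) c))
    -- ... and eigenvalues bounded above:
    (hbdd : ∃ B : ℝ, ∀ c : ℂ,
      Module.End.eigenspace (LieModule.toEnd ℂ k M hh) c ≠ ⊥ → c.re ≤ B)
    -- `e` and `f` act locally finitely:
    (he : ActsLocallyFinitely (LieModule.toEnd ℂ k M e))
    (hf : ActsLocallyFinitely (LieModule.toEnd ℂ k M f)) :
    ∀ m : M, ∃ N : LieSubmodule ℂ k M, FiniteDimensional ℂ N ∧ m ∈ N := by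
  intro m
  have key : ∀ (c : ℂ) (x : M), ⁅hh, x⁆ = c • x →
      ∃ N : LieSubmodule ℂ k M, FiniteDimensional ℂ N ∧ x ∈ N :=
    fun c x hx => aux_eigvec k e hh f t hspan M he hf c x hx
  set P : Submodule ℂ M :=
    { carrier := {x | ∃ N : LieSubmodule ℂ k M, FiniteDimensional ℂ N ∧ x ∈ N}
      zero_mem' := key 0 0 (by simp)
      add_mem' := by
        rintro x y ⟨N1, h1, hx⟩ ⟨N2, h2, hy⟩
        haveI : FiniteDimensional ℂ (N1 : Submodule ℂ M) := h1
        haveI : FiniteDimensional ℂ (N2 : Submodule ℂ M) := h2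
        refine ⟨N1 ⊔ N2, ?_, ?_⟩
        · have hsup : ((N1 ⊔ N2 : LieSubmodule ℂ k M) : Submodule ℂ M) =
              (N1 : Submodule ℂ M) ⊔ (N2 : Submodule ℂ M) :=
            LieSubmodule.sup_toSubmodule N1 N2
          exact (by rw [hsup]; infer_instance :
            FiniteDimensional ℂ ((N1 ⊔ N2 : LieSubmodule ℂ k M) : Submodule ℂ M))
        · exact add_mem ((le_sup_left : N1 ≤ N1 ⊔ N2) hx) ((le_sup_right : N2 ≤ N1 ⊔ N2) hy)
      smul_mem' := by
        rintro a x ⟨N1, h1, hx⟩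
        exact ⟨N1, h1, N1.smul_mem a hx⟩ } with hP
  have hle : (⨆ c : ℂ, Module.End.eigenspace (LieModule.toEnd ℂ k M hh) c) ≤ P := by
    refine iSup_le fun c => fun x hx => ?_
    have hx' : ⁅hh, x⁆ = c • x := Module.End.mem_eigenspace_iff.1 hx
    exact key c x hx'
  have hmem : m ∈ (⨆ c : ℂ, Module.End.eigenspace (LieModule.toEnd ℂ k M hh) c) := by
    rw [hss]; trivial
  exact hle hmem
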